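/- Let K : [-1,1] → ℝ be a kernel with K(0) = 1, sup_{x∈[0,1]} K(x) ≤ 1, and 1 − K(x) ≤ C_K |x|^τ for some τ > 0 and constant C_K. Let (a_h)_{h∈ℤ} be nonnegative with a_{−h} = a_h, and suppose there exist Φ₀, Φ_α > 0 and α > 0 with Σ_{|h| > m} a_h ≤ Φ_α m^{−α} for all m ≥ 1 and Σ_{h∈ℤ} a_h ≤ Φ₀. Then for every integer m₀ ≥ 1, R(m₀) := Σ_{|h| > m₀} a_h + Σ_{|h| ≤ m₀} (1 − K(h/m₀)) a_h ≤ C (Φ₀ + Φ_α) m₀^{−ατ/(τ+α)}, where C depends only on C_K, τ, α. -/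

import Mathlib

set_option maxHeartbeats 1600000 in
/-- Combined truncation and kernel-smoothing error of a lag-window estimator: for a kernel
`K` with `K 0 = 1`, `K ≤ 1` on `[0,1]` and `1 − K(x) ≤ C_K |x|^τ`, and a nonnegative symmetric
summable sequence `(a_h)` with `Σ_{|h|>m} a_h ≤ Φ_α m^{−α}` and `Σ_h a_h ≤ Φ₀`, there is
`C = C(C_K, τ, α)` such that for every `m₀ ≥ 1`,
`Σ_{|h|>m₀} a_h + Σ_{|h|≤m₀} (1 − K(h/m₀)) a_h ≤ C (Φ₀ + Φ_α) m₀^{−ατ/(τ+α)}`. -/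
theorem lag_window_truncation_error (CK τ α : ℝ) (hCK : 0 ≤ CK) (hτ : 0 < τ) (hα : 0 < α) :
    ∃ C : ℝ, 0 < C ∧
      ∀ (K : ℝ → ℝ) (a : ℤ → ℝ) (Φ₀ Φα : ℝ),
        K 0 = 1 →
        (∀ x ∈ Set.Icc (0 : ℝ) 1, K x ≤ 1) →
        (∀ x ∈ Set.Icc (-1 : ℝ) 1, 1 - K x ≤ CK * |x| ^ τ) →
        (∀ h, 0 ≤ a h) →
        (∀ h : ℤ, a (-h) = a h) →
        Summable a →
        (∑' h : ℤ, a h) ≤ Φ₀ →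
        (∀ m : ℕ, 1 ≤ m →
          (∑' h : ℤ, if (m : ℤ) < |h| then a h else 0) ≤ Φα * (m : ℝ) ^ (-α)) →
        ∀ m₀ : ℕ, 1 ≤ m₀ →
          (∑' h : ℤ, if (m₀ : ℤ) < |h| then a h else 0) +
              (∑ h ∈ Finset.Icc (-(m₀ : ℤ)) (m₀ : ℤ), (1 - K ((h : ℝ) / (m₀ : ℝ))) * a h) ≤
            C * (Φ₀ + Φα) * (m₀ : ℝ) ^ (-(α * τ) / (τ + α)) := by
  have hτα : (0:ℝ) < τ + α := by linarith
  set β : ℝ := τ / (τ + α) with hβdef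
  have hβpos : 0 < β := div_pos hτ hτα
  have hβle1 : β ≤ 1 := by
    rw [div_le_one hτα]; linarith
  set E : ℝ := -(α * τ) / (τ + α) with hEdef
  have hE1 : E = (β - 1) * τ := by
    rw [hEdef, hβdef]; field_simp; ring
  have hE2 : E = β * (-α) := by
    rw [hEdef, hβdef, div_mul_eq_mul_div]; ring_nf
  have h2α : (0:ℝ) < (2:ℝ) ^ α := Real.rpow_pos_of_pos two_pos α
  refine ⟨1 + CK + CK * (2:ℝ) ^ α, by positivity, ?_⟩
  intro K a Φ₀ Φα hK0 hKle hKlip ha hsym hsum hΦ₀ hΦα m₀ hm₀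
  have hx : (1:ℝ) ≤ (m₀ : ℝ) := by exact_mod_cast hm₀
  have hxpos : (0:ℝ) < (m₀ : ℝ) := by linarith
  set x : ℝ := (m₀ : ℝ) with hxdef
  have hxβ1 : (1:ℝ) ≤ x ^ β := Real.one_le_rpow hx hβpos.le
  set M : ℕ := ⌊x ^ β⌋₊ with hMdef
  have hM1 : 1 ≤ M := by
    rw [hMdef]; exact Nat.le_floor (by exact_mod_cast hxβ1)
  have hMle : (M : ℝ) ≤ x ^ β := Nat.floor_le (by positivity)
  have hMpos : (0:ℝ) < (M : ℝ) := by exact_mod_cast hM1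
  have h2M : x ^ β ≤ 2 * (M : ℝ) := by
    have := Nat.lt_floor_add_one (x ^ β)
    have hM1' : (1:ℝ) ≤ (M:ℝ) := by exact_mod_cast hM1
    rw [← hMdef] at this
    linarith
  have hxE : (0:ℝ) < x ^ E := Real.rpow_pos_of_pos hxpos E
  -- nonnegativity of Φ₀, Φα
  have htsum_nonneg : 0 ≤ ∑' h : ℤ, a h := tsum_nonneg ha
  have hΦ₀0 : 0 ≤ Φ₀ := le_trans htsum_nonneg hΦ₀
  have hΦα0 : 0 ≤ Φα := by
    have h1 := hΦα 1 le_rfl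
    have h2 : 0 ≤ ∑' h : ℤ, if ((1:ℕ) : ℤ) < |h| then a h else 0 :=
      tsum_nonneg fun h => by split <;> [exact ha h; exact le_rfl]
    push_cast at h1 h2
    rw [Real.one_rpow, mul_one] at h1
    linarith
  -- summability of tails
  have hsumtail : ∀ m : ℤ, Summable (fun h : ℤ => if m < |h| then a h else 0) := by
    intro m
    apply Summable.of_nonneg_of_le (fun h => by split <;> [exact ha h; exact le_rfl])
      (fun h => by split <;> [exact le_rfl; exact ha h]) hsum
  -- bound on M^(-α)
  have hMα : (M : ℝ) ^ (-α) ≤ (2:ℝ) ^ α * x ^ E := by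
    have h1 : (M : ℝ) ^ (-α) ≤ (x ^ β / 2) ^ (-α) := by
      apply Real.rpow_le_rpow_of_nonpos (by positivity) (by linarith) (by linarith)
    have h2 : (x ^ β / 2) ^ (-α) = (2:ℝ) ^ α * x ^ E := by
      rw [Real.div_rpow (by positivity) (by norm_num), ← Real.rpow_mul hxpos.le, ← hE2,
        Real.rpow_neg (by norm_num : (0:ℝ) ≤ 2), div_inv_eq_mul, mul_comm]
    linarith
  -- tail term bound
  have hT1 : (∑' h : ℤ, if (m₀ : ℤ) < |h| then a h else 0) ≤ Φα * x ^ E := by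
    have h1 := hΦα m₀ hm₀
    have h2 : x ^ (-α) ≤ x ^ E := by
      apply Real.rpow_le_rpow_of_exponent_le hx
      rw [hE2]
      have : β * α ≤ 1 * α := mul_le_mul_of_nonneg_right hβle1 hα.le
      nlinarith
    calc (∑' h : ℤ, if (m₀ : ℤ) < |h| then a h else 0) ≤ Φα * x ^ (-α) := h1
      _ ≤ Φα * x ^ E := mul_le_mul_of_nonneg_left h2 hΦα0
  -- the finite sum
  set S := Finset.Icc (-(m₀ : ℤ)) (m₀ : ℤ) with hSdef
  have hmem : ∀ h ∈ S, |(h:ℝ)| ≤ x := by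
    intro h hh
    rw [Finset.mem_Icc] at hh
    rw [abs_le, hxdef]
    constructor <;> [exact_mod_cast hh.1; exact_mod_cast hh.2]
  -- pointwise bound
  have hpt : ∀ h ∈ S, (1 - K ((h : ℝ) / x)) * a h ≤ CK * (|(h:ℝ)| / x) ^ τ * a h := by
    intro h hh
    have habs : |(h:ℝ) / x| = |(h:ℝ)| / x := by
      rw [abs_div, abs_of_pos hxpos]
    have hmem2 : (h:ℝ) / x ∈ Set.Icc (-1:ℝ) 1 := by
      constructor
      · rw [le_div_iff₀ hxpos]
        have := hmem h hh; rw [abs_le] at this; linarith [this.1]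
      · rw [div_le_one hxpos]
        have := hmem h hh; rw [abs_le] at this; linarith [this.2]
    have := hKlip _ hmem2
    rw [habs] at this
    exact mul_le_mul_of_nonneg_right this (ha h)
  -- split S
  have hsplit := Finset.sum_filter_add_sum_filter_not S (fun h => |h| ≤ (M:ℤ))
    (fun h => (1 - K ((h : ℝ) / x)) * a h)
  set S₁ := S.filter (fun h => |h| ≤ (M:ℤ)) with hS₁
  set S₂ := S.filter (fun h => ¬(|h| ≤ (M:ℤ))) with hS₂
  -- bound on S₁
  have hB1 : ∑ h ∈ S₁, (1 - K ((h : ℝ) / x)) * a h ≤ CK * x ^ E * Φ₀ := by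
    have step1 : ∑ h ∈ S₁, (1 - K ((h : ℝ) / x)) * a h ≤ ∑ h ∈ S₁, CK * x ^ E * a h := by
      apply Finset.sum_le_sum
      intro h hh
      have hhS : h ∈ S := Finset.mem_filter.mp hh |>.1
      have hhM : |h| ≤ (M:ℤ) := Finset.mem_filter.mp hh |>.2
      refine le_trans (hpt h hhS) ?_
      apply mul_le_mul_of_nonneg_right _ (ha h)
      apply mul_le_mul_of_nonneg_left _ hCK
      have habs : |(h:ℝ)| ≤ (M:ℝ) := by
        have : |(h:ℝ)| = ((|h| : ℤ) : ℝ) := by push_cast; simp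
        rw [this]; exact_mod_cast hhM
      have h1 : |(h:ℝ)| / x ≤ (M:ℝ) / x := by gcongr
      have h2 : (|(h:ℝ)| / x) ^ τ ≤ ((M:ℝ) / x) ^ τ :=
        Real.rpow_le_rpow (by positivity) h1 hτ.le
      have h3 : ((M:ℝ) / x) ^ τ ≤ (x ^ β / x) ^ τ := by
        apply Real.rpow_le_rpow (by positivity) _ hτ.le
        gcongr
      have h4 : (x ^ β / x) ^ τ = x ^ E := by
        have hdiv : x ^ β / x = x ^ (β - 1) := by
          rw [Real.rpow_sub hxpos, Real.rpow_one]
        rw [hdiv, ← Real.rpow_mul hxpos.le, ← hE1]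
      linarith
    have step2 : ∑ h ∈ S₁, a h ≤ Φ₀ := by
      exact le_trans (Summable.sum_le_tsum S₁ (fun h _ => ha h) hsum) hΦ₀
    calc ∑ h ∈ S₁, (1 - K ((h : ℝ) / x)) * a h ≤ ∑ h ∈ S₁, CK * x ^ E * a h := step1
      _ = CK * x ^ E * ∑ h ∈ S₁, a h := by rw [Finset.mul_sum]
      _ ≤ CK * x ^ E * Φ₀ := mul_le_mul_of_nonneg_left step2 (by positivity)
  -- bound on S₂
  have hB2 : ∑ h ∈ S₂, (1 - K ((h : ℝ) / x)) * a h ≤ CK * ((2:ℝ)^α * Φα * x ^ E) := by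
    have step1 : ∑ h ∈ S₂, (1 - K ((h : ℝ) / x)) * a h ≤ ∑ h ∈ S₂, CK * a h := by
      apply Finset.sum_le_sum
      intro h hh
      have hhS : h ∈ S := Finset.mem_filter.mp hh |>.1
      refine le_trans (hpt h hhS) ?_
      apply mul_le_mul_of_nonneg_right _ (ha h)
      have h1 : (|(h:ℝ)| / x) ^ τ ≤ 1 := by
        apply Real.rpow_le_one (by positivity) _ hτ.le
        rw [div_le_one hxpos]; exact hmem h hhS
      nlinarith
    have step2 : ∑ h ∈ S₂, a h ≤ Φα * (M:ℝ) ^ (-α) := by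
      have key : ∑ h ∈ S₂, a h ≤ ∑' h : ℤ, if (M : ℤ) < |h| then a h else 0 := by
        have heq : ∀ h ∈ S₂, a h = if (M : ℤ) < |h| then a h else 0 := by
          intro h hh
          have hhM : ¬(|h| ≤ (M:ℤ)) := Finset.mem_filter.mp hh |>.2
          rw [if_pos (lt_of_not_ge hhM)]
        rw [Finset.sum_congr rfl heq]
        exact Summable.sum_le_tsum S₂
          (fun h _ => by split <;> [exact ha h; exact le_rfl]) (hsumtail _)
      exact le_trans key (hΦα M hM1)
    calc ∑ h ∈ S₂, (1 - K ((h : ℝ) / x)) * a h ≤ ∑ h ∈ S₂, CK * a h := step1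
      _ = CK * ∑ h ∈ S₂, a h := by rw [Finset.mul_sum]
      _ ≤ CK * (Φα * (M:ℝ) ^ (-α)) := mul_le_mul_of_nonneg_left step2 hCK
      _ ≤ CK * ((2:ℝ)^α * Φα * x ^ E) := by
          apply mul_le_mul_of_nonneg_left _ hCK
          calc Φα * (M:ℝ) ^ (-α) ≤ Φα * ((2:ℝ)^α * x ^ E) :=
                mul_le_mul_of_nonneg_left hMα hΦα0
            _ = (2:ℝ)^α * Φα * x ^ E := by ring
  -- assemble
  have hfin : ∑ h ∈ S, (1 - K ((h : ℝ) / x)) * a h ≤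
      CK * x ^ E * Φ₀ + CK * ((2:ℝ)^α * Φα * x ^ E) := by
    rw [← hsplit]
    exact add_le_add hB1 hB2
  have : (∑' h : ℤ, if (m₀ : ℤ) < |h| then a h else 0) +
      (∑ h ∈ S, (1 - K ((h : ℝ) / x)) * a h) ≤
      Φα * x ^ E + (CK * x ^ E * Φ₀ + CK * ((2:ℝ)^α * Φα * x ^ E)) :=
    add_le_add hT1 hfin
  refine le_trans this ?_
  have : Φα * x ^ E + (CK * x ^ E * Φ₀ + CK * ((2:ℝ)^α * Φα * x ^ E)) =
      (Φα + CK * Φ₀ + CK * (2:ℝ)^α * Φα) * x ^ E := by ring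
  rw [this]
  apply mul_le_mul_of_nonneg_right _ hxE.le
  nlinarith [mul_nonneg hCK hΦ₀0, mul_nonneg (mul_nonneg hCK h2α.le) hΦα0,
    mul_nonneg hCK hΦα0, mul_nonneg (mul_nonneg hCK h2α.le) hΦ₀0]
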